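/- Let ε > 0, let n be sufficiently large, let Δ satisfy n/log n ≤ Δ ≤ n − 1, and set k = ⌈(n−1)/Δ⌉. Then with probability tending to 1 as n → ∞, the random graph G(n, 1 − n^{−(1−ε)/k}) contains no dominating set of size k. -/

import Mathlib

open MeasureTheory Filter

variable {ι : Type*} [Fintype ι]

lemma meas_all [Countable ι] (S : Set (ι → Bool)) : MeasurableSet S := by
  have : Countable (ι → Bool) := by
    have : Finite ι := Finite.of_fintype ι
    infer_instance
  exact (Set.to_countable S).measurableSet

lemma pi_split (μ : ι → Measure Bool) [∀ i, IsProbabilityMeasure (μ i)]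
    (p : ι → Prop) [DecidablePred p]
    (A : Set ((Subtype p) → Bool)) (B : Set ({i // ¬ p i} → Bool)) :
    Measure.pi μ ({ω : ι → Bool | (fun i : Subtype p => ω i) ∈ A}
        ∩ {ω : ι → Bool | (fun i : {i // ¬ p i} => ω i) ∈ B})
      = Measure.pi μ {ω : ι → Bool | (fun i : Subtype p => ω i) ∈ A}
        * Measure.pi μ {ω : ι → Bool | (fun i : {i // ¬ p i} => ω i) ∈ B} := by
  have hmp := measurePreserving_piEquivPiSubtypeProd (α := fun _ : ι => Bool) μ p
  have hApre : ∀ (A' : Set ((Subtype p) → Bool)) (B' : Set ({i // ¬ p i} → Bool)),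
      (MeasurableEquiv.piEquivPiSubtypeProd (fun _ : ι => Bool) p) ⁻¹' (A' ×ˢ B')
        = {ω : ι → Bool | (fun i : Subtype p => ω i) ∈ A'}
          ∩ {ω : ι → Bool | (fun i : {i // ¬ p i} => ω i) ∈ B'} := by
    intro A' B'
    ext ω
    simp [MeasurableEquiv.piEquivPiSubtypeProd, Equiv.piEquivPiSubtypeProd, Set.mem_prod]
  have key : ∀ (A' : Set ((Subtype p) → Bool)) (B' : Set ({i // ¬ p i} → Bool)),
      Measure.pi μ ({ω : ι → Bool | (fun i : Subtype p => ω i) ∈ A'}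
          ∩ {ω : ι → Bool | (fun i : {i // ¬ p i} => ω i) ∈ B'})
        = (Measure.pi fun i : Subtype p => μ i) A' * (Measure.pi fun i : {i // ¬ p i} => μ i) B' := by
    intro A' B'
    rw [← hApre, hmp.measure_preimage (((meas_all A').prod (meas_all B')).nullMeasurableSet),
      Measure.prod_prod]
  rw [key A B]
  have h1 := key A Set.univ
  have h2 := key Set.univ B
  simp only [Set.mem_univ, Set.setOf_true, Set.inter_univ, Set.univ_inter, measure_univ] at h1 h2
  rw [h1, h2]; ring

lemma pi_prod_of_disjoint (μ : ι → Measure Bool) [∀ i, IsProbabilityMeasure (μ i)]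
    {V : Type*} (C : V → Finset ι) (E : V → Set (ι → Bool)) (T : Finset V)
    (hdisj : ∀ v ∈ T, ∀ w ∈ T, v ≠ w → Disjoint (C v) (C w))
    (hE : ∀ v ∈ T, ∀ ω ω' : ι → Bool, (∀ i ∈ C v, ω i = ω' i) → ω ∈ E v → ω' ∈ E v) :
    Measure.pi μ (⋂ v ∈ T, E v) = ∏ v ∈ T, Measure.pi μ (E v) := by
  classical
  revert hdisj hE
  induction T using Finset.induction_on with
  | empty => intro _ _; simp
  | @insert v s hv ih =>
    intro hdisj hE
    have hvs : ∀ w ∈ s, v ≠ w := fun w hw h => hv (h ▸ hw)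
    set p : ι → Prop := fun i => i ∈ C v with hp
    set A : Set (Subtype p → Bool) :=
      {σ | (fun i => if h : p i then σ ⟨i, h⟩ else false) ∈ E v} with hA
    set B : Set ({i // ¬ p i} → Bool) :=
      {τ | (fun i => if h : ¬ p i then τ ⟨i, h⟩ else false) ∈ ⋂ w ∈ s, E w} with hB
    have hEv : E v = {ω : ι → Bool | (fun i : Subtype p => ω i) ∈ A} := by
      ext ω
      simp only [Set.mem_setOf_eq, hA]
      constructor
      · intro h
        refine hE v (Finset.mem_insert_self v s) ω _ (fun i hi => ?_) h
        simp [hp, hi]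
      · intro h
        refine hE v (Finset.mem_insert_self v s) _ ω (fun i hi => ?_) h
        simp [hp, hi]
    have hrest : (⋂ w ∈ s, E w) = {ω : ι → Bool | (fun i : {i // ¬ p i} => ω i) ∈ B} := by
      have hnp : ∀ w ∈ s, ∀ i ∈ C w, ¬ p i := by
        intro w hw i hi hpi
        exact Finset.disjoint_left.mp
          (hdisj v (Finset.mem_insert_self v s) w (Finset.mem_insert_of_mem hw) (hvs w hw)) hpi hi
      ext ω
      simp only [Set.mem_setOf_eq, hB, Set.mem_iInter]
      constructor
      · intro h w hw
        refine hE w (Finset.mem_insert_of_mem hw) ω _ (fun i hi => ?_) (h w hw)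
        simp [hnp w hw i hi]
      · intro h w hw
        refine hE w (Finset.mem_insert_of_mem hw) _ ω (fun i hi => ?_) (h w hw)
        simp [hnp w hw i hi]
    rw [Finset.set_biInter_insert, hEv, hrest, pi_split μ p A B, ← hEv, ← hrest,
      ih (fun a ha b hb hab => hdisj a (Finset.mem_insert_of_mem ha) b (Finset.mem_insert_of_mem hb) hab)
         (fun a ha => hE a (Finset.mem_insert_of_mem ha)),
      Finset.prod_insert hv]

lemma bound_n (n kk : ℕ) (θ : NNReal) (hθ : θ ≤ 1) :
    (Measure.pi (fun _ : Sym2 (Fin n) => (PMF.bernoulli θ hθ).toMeasure))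
      {ω : Sym2 (Fin n) → Bool | ∃ K : Finset (Fin n), K.card = kk ∧
        ∀ v : Fin n, v ∉ K → ∃ u ∈ K, u ≠ v ∧ ω s(u, v) = true}
      ≤ (n.choose kk : ENNReal) * (1 - (1 - (θ : ENNReal)) ^ kk) ^ (n - kk) := by
  classical
  set μ := fun _ : Sym2 (Fin n) => (PMF.bernoulli θ hθ).toMeasure with hμ
  have hprob : ∀ e : Sym2 (Fin n), IsProbabilityMeasure (μ e) := fun e =>
    PMF.toMeasure.isProbabilityMeasure _
  set E : Finset (Fin n) → Fin n → Set (Sym2 (Fin n) → Bool) :=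
    fun K v => {ω | ∃ u ∈ K, u ≠ v ∧ ω s(u, v) = true} with hEdef
  set C : Finset (Fin n) → Fin n → Finset (Sym2 (Fin n)) :=
    fun K v => K.image (fun u => s(u, v)) with hCdef
  have hsub : {ω : Sym2 (Fin n) → Bool | ∃ K : Finset (Fin n), K.card = kk ∧
        ∀ v : Fin n, v ∉ K → ∃ u ∈ K, u ≠ v ∧ ω s(u, v) = true}
      ⊆ ⋃ K ∈ Finset.powersetCard kk (Finset.univ : Finset (Fin n)),
          ⋂ v ∈ (Finset.univ \ K), E K v := by
    rintro ω ⟨K, hK, hdom⟩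
    refine Set.mem_biUnion (Finset.mem_powersetCard_univ.mpr hK) ?_
    simp only [Set.mem_iInter]
    intro v hv
    exact hdom v (Finset.mem_sdiff.mp hv).2
  refine le_trans (measure_mono hsub) (le_trans (measure_biUnion_finset_le _ _) ?_)
  have hbound : ∀ K ∈ Finset.powersetCard kk (Finset.univ : Finset (Fin n)),
      Measure.pi μ (⋂ v ∈ (Finset.univ \ K), E K v) ≤ (1 - (1 - (θ : ENNReal)) ^ kk) ^ (n - kk) := by
    intro K hK
    have hKcard : K.card = kk := Finset.mem_powersetCard_univ.mp hK
    have hdisj : ∀ v ∈ Finset.univ \ K, ∀ w ∈ Finset.univ \ K, v ≠ w →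
        Disjoint (C K v) (C K w) := by
      intro v hv w hw hvw
      have hwK : w ∉ K := (Finset.mem_sdiff.mp hw).2
      rw [Finset.disjoint_left]
      rintro e he he'
      simp only [hCdef, Finset.mem_image] at he he'
      obtain ⟨u, hu, rfl⟩ := he
      obtain ⟨u', hu', heq⟩ := he'
      rcases Sym2.eq_iff.mp heq with ⟨h1, h2⟩ | ⟨h1, h2⟩
      · exact hvw (h2.symm)
      · exact hwK (by rw [h2]; exact hu)
    have hEinv : ∀ v ∈ Finset.univ \ K, ∀ ω ω' : Sym2 (Fin n) → Bool,
        (∀ i ∈ C K v, ω i = ω' i) → ω ∈ E K v → ω' ∈ E K v := by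
      rintro v hv ω ω' hag ⟨u, hu, hne, ht⟩
      exact ⟨u, hu, hne, by rw [← hag _ (Finset.mem_image_of_mem _ hu)]; exact ht⟩
    rw [pi_prod_of_disjoint μ (C K) (E K) _ hdisj hEinv]
    have hvmeas : ∀ v ∈ Finset.univ \ K, Measure.pi μ (E K v) = 1 - (1 - (θ : ENNReal)) ^ kk := by
      intro v hv
      have hvK : v ∉ K := (Finset.mem_sdiff.mp hv).2
      have hcompl : (E K v)ᶜ =
          Set.pi Set.univ (fun e => if e ∈ C K v then ({false} : Set Bool) else Set.univ) := by
        ext ω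
        simp only [Set.mem_compl_iff, hEdef, Set.mem_setOf_eq, Set.mem_pi, Set.mem_univ,
          true_implies]
        constructor
        · intro h e
          split_ifs with he
          · simp only [hCdef, Finset.mem_image] at he
            obtain ⟨u, hu, rfl⟩ := he
            simp only [Set.mem_singleton_iff]
            by_contra hf
            exact h ⟨u, hu, fun h' => hvK (h' ▸ hu), by
              simpa [Bool.not_eq_false] using hf⟩
          · trivial
        · rintro h ⟨u, hu, hne, ht⟩
          have h2 := h s(u, v)
          rw [if_pos (Finset.mem_image_of_mem _ hu)] at h2
          rw [ht] at h2
          simp at h2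
      have hComplMeas : Measure.pi μ ((E K v)ᶜ) = (1 - (θ : ENNReal)) ^ kk := by
        rw [hcompl, Measure.pi_pi]
        have hμfalse : ∀ e : Sym2 (Fin n), μ e ({false} : Set Bool) = 1 - θ := by
          intro e
          rw [hμ]
          dsimp only
          rw [PMF.toMeasure_apply_singleton _ _ (measurableSet_singleton _)]
          rw [PMF.bernoulli_apply, Bool.cond_false, ENNReal.coe_sub, ENNReal.coe_one]
        calc ∏ e : Sym2 (Fin n), (μ e) (if e ∈ C K v then ({false} : Set Bool) else Set.univ)
            = ∏ e : Sym2 (Fin n), (if e ∈ C K v then (1 - (θ : ENNReal)) else 1) := by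
              refine Finset.prod_congr rfl fun e _ => ?_
              split_ifs with he
              · exact hμfalse e
              · exact measure_univ
          _ = (1 - (θ : ENNReal)) ^ (C K v).card := by
              rw [Finset.prod_ite_mem, Finset.univ_inter, Finset.prod_const]
          _ = (1 - (θ : ENNReal)) ^ kk := by
              congr 1
              rw [hCdef]
              dsimp only
              rw [Finset.card_image_of_injOn, hKcard]
              intro a ha b hb hab
              rcases Sym2.eq_iff.mp hab with ⟨h1, _⟩ | ⟨h1, h2⟩
              · exact h1
              · exact absurd (h1 ▸ ha) hvK
      have hcc := prob_compl_eq_one_sub (μ := Measure.pi μ) (meas_all ((E K v)ᶜ))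
      rw [compl_compl] at hcc
      rw [hcc, hComplMeas]
    refine le_of_eq ?_
    calc ∏ v ∈ Finset.univ \ K, Measure.pi μ (E K v)
        = ∏ _v ∈ Finset.univ \ K, (1 - (1 - (θ : ENNReal)) ^ kk) := Finset.prod_congr rfl hvmeas
      _ = (1 - (1 - (θ : ENNReal)) ^ kk) ^ (Finset.univ \ K).card := Finset.prod_const _
      _ = (1 - (1 - (θ : ENNReal)) ^ kk) ^ (n - kk) := by
          rw [Finset.card_sdiff_of_subset (Finset.subset_univ K), Finset.card_univ, Fintype.card_fin, hKcard]
  calc ∑ K ∈ Finset.powersetCard kk (Finset.univ : Finset (Fin n)),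
        Measure.pi μ (⋂ v ∈ (Finset.univ \ K), E K v)
      ≤ ∑ _K ∈ Finset.powersetCard kk (Finset.univ : Finset (Fin n)),
        (1 - (1 - (θ : ENNReal)) ^ kk) ^ (n - kk) := Finset.sum_le_sum hbound
    _ = (n.choose kk : ENNReal) * (1 - (1 - (θ : ENNReal)) ^ kk) ^ (n - kk) := by
        rw [Finset.sum_const, nsmul_eq_mul, Finset.card_powersetCard, Finset.card_univ,
          Fintype.card_fin]

set_option maxHeartbeats 1600000 in
theorem stmt_14 (ε : ℝ) (hε : 0 < ε) (Δ : ℕ → ℕ)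
    (hΔ : ∀ᶠ n : ℕ in atTop,
      (n : ℝ) / Real.log n ≤ Δ n ∧ Δ n ≤ n - 1) :
    Tendsto (fun n : ℕ =>
      (Measure.pi (fun _ : Sym2 (Fin n) =>
          (PMF.bernoulli
            (Real.toNNReal (1 - (n : ℝ) ^ (-(1 - ε) / (⌈((n : ℝ) - 1) / Δ n⌉₊ : ℝ))))
            (Real.toNNReal_le_one.mpr (by
              nlinarith [Real.rpow_nonneg (Nat.cast_nonneg n : (0:ℝ) ≤ (n:ℝ))
                (-(1 - ε) / (⌈((n : ℝ) - 1) / Δ n⌉₊ : ℝ))]))).toMeasure))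
        {ω : Sym2 (Fin n) → Bool |
          ∃ K : Finset (Fin n), K.card = ⌈((n : ℝ) - 1) / Δ n⌉₊ ∧
            ∀ v : Fin n, v ∉ K → ∃ u ∈ K, u ≠ v ∧ ω s(u, v) = true})
      atTop (nhds 0) := by
  set ε' : ℝ := min ε 1 with hε'def
  have hε'pos : 0 < ε' := lt_min hε one_pos
  have hε'le : ε' ≤ 1 := min_le_right _ _
  have hε'ε : ε' ≤ ε := min_le_left _ _
  set c : ℕ → ℝ := fun n => 2 * Real.log n ^ 2 - (n : ℝ) ^ ε' / 2 with hcdef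
  -- c tends to -∞
  have hB : Tendsto (fun x : ℝ => Real.log x ^ 2 / x ^ ε') atTop (nhds 0) := by
    have h := (isLittleO_log_rpow_rpow_atTop 2 hε'pos).tendsto_div_nhds_zero
    refine h.congr fun x => ?_
    rw [← Real.rpow_natCast (Real.log x) 2]
    norm_num
  have hreal : Tendsto (fun x : ℝ => 2 * Real.log x ^ 2 - x ^ ε' / 2) atTop atBot := by
    have hA : Tendsto (fun x : ℝ => x ^ ε') atTop atTop := tendsto_rpow_atTop hε'pos
    have hg : Tendsto (fun x : ℝ => 2 * (Real.log x ^ 2 / x ^ ε') - 1/2) atTop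
        (nhds (2 * 0 - 1/2)) := ((hB.const_mul 2).sub_const (1/2))
    have hmul := hA.atTop_mul_neg (by norm_num : 2 * (0:ℝ) - 1/2 < 0) hg
    refine hmul.congr' ?_
    filter_upwards [eventually_ge_atTop (1:ℝ)] with x hx
    have hxp : (0:ℝ) < x ^ ε' := Real.rpow_pos_of_pos (by linarith) _
    field_simp
  have hc : Tendsto c atTop atBot := hreal.comp tendsto_natCast_atTop_atTop
  have hlim : Tendsto (fun n : ℕ => ENNReal.ofReal (Real.exp (c n))) atTop (nhds 0) := by
    have h := ENNReal.tendsto_ofReal (Real.tendsto_exp_atBot.comp hc)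
    simpa using h
  -- eventual bound
  have hhalf : ∀ᶠ n : ℕ in atTop, Real.log n + 1 ≤ (n : ℝ) / 2 := by
    have hbnd := Real.isLittleO_log_id_atTop.def (by norm_num : (0:ℝ) < 1/4)
    have h4 : ∀ᶠ x : ℝ in atTop, x ≥ 4 := eventually_ge_atTop 4
    have : ∀ᶠ x : ℝ in atTop, Real.log x + 1 ≤ x / 2 := by
      filter_upwards [hbnd, h4] with x hx hx4
      have hlogx : Real.log x ≤ 1/4 * x := by
        have h0 : 0 ≤ Real.log x := Real.log_nonneg (by linarith)
        calc Real.log x = ‖Real.log x‖ := (Real.norm_of_nonneg h0).symm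
          _ ≤ 1/4 * ‖x‖ := hx
          _ = 1/4 * x := by rw [Real.norm_of_nonneg (by linarith)]
      linarith
    exact tendsto_natCast_atTop_atTop.eventually this
  have hloge : ∀ᶠ n : ℕ in atTop, 1 ≤ Real.log n := by
    have : ∀ᶠ x : ℝ in atTop, 1 ≤ Real.log x :=
      Real.tendsto_log_atTop.eventually_ge_atTop 1
    exact tendsto_natCast_atTop_atTop.eventually this
  have hub : ∀ᶠ n : ℕ in atTop,
      (Measure.pi (fun _ : Sym2 (Fin n) =>
          (PMF.bernoulli
            (Real.toNNReal (1 - (n : ℝ) ^ (-(1 - ε) / (⌈((n : ℝ) - 1) / Δ n⌉₊ : ℝ))))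
            (Real.toNNReal_le_one.mpr (by
              nlinarith [Real.rpow_nonneg (Nat.cast_nonneg n : (0:ℝ) ≤ (n:ℝ))
                (-(1 - ε) / (⌈((n : ℝ) - 1) / Δ n⌉₊ : ℝ))]))).toMeasure))
        {ω : Sym2 (Fin n) → Bool |
          ∃ K : Finset (Fin n), K.card = ⌈((n : ℝ) - 1) / Δ n⌉₊ ∧
            ∀ v : Fin n, v ∉ K → ∃ u ∈ K, u ≠ v ∧ ω s(u, v) = true}
        ≤ ENNReal.ofReal (Real.exp (c n)) := by
    filter_upwards [hΔ, hhalf, hloge, eventually_ge_atTop 4] with n hΔn hhalfn hlogn hn4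
    have hn4R : (4:ℝ) ≤ n := by exact_mod_cast hn4
    have npos : (0:ℝ) < n := by linarith
    have hn1 : (1:ℝ) ≤ n := by linarith
    have hlogpos : (0:ℝ) < Real.log n := by linarith
    have hΔpos : (0:ℝ) < Δ n := lt_of_lt_of_le (div_pos npos hlogpos) hΔn.1
    set k : ℕ := ⌈((n : ℝ) - 1) / Δ n⌉₊ with hkdef
    have hxpos : (0:ℝ) < ((n : ℝ) - 1) / Δ n := div_pos (by linarith) hΔpos
    have hk1 : 1 ≤ k := Nat.one_le_ceil_iff.mpr hxpos
    have hkR0 : (0:ℝ) < k := by exact_mod_cast hk1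
    have hkub : (k : ℝ) ≤ Real.log n + 1 := by
      have h1 : (k : ℝ) < ((n : ℝ) - 1) / Δ n + 1 := Nat.ceil_lt_add_one hxpos.le
      have h2 : ((n : ℝ) - 1) / Δ n ≤ Real.log n := by
        have h3 : ((n : ℝ) - 1) / Δ n ≤ ((n : ℝ) - 1) / ((n : ℝ) / Real.log n) :=
          div_le_div_of_nonneg_left (by linarith) (div_pos npos hlogpos) hΔn.1
        have h4 : ((n : ℝ) - 1) / ((n : ℝ) / Real.log n) = ((n : ℝ) - 1) * Real.log n / n := by
          field_simp
        rw [h4] at h3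
        refine h3.trans ?_
        rw [div_le_iff₀ npos]
        nlinarith
      linarith
    have hk2 : (k : ℝ) ≤ (n : ℝ) / 2 := hkub.trans hhalfn
    have hkn : k ≤ n := by
      have : (k : ℝ) ≤ (n : ℝ) := by linarith
      exact_mod_cast this
    have hnkR : ((n - k : ℕ) : ℝ) = (n : ℝ) - k := by
      rw [Nat.cast_sub hkn]
    have hnk2 : (n : ℝ) / 2 ≤ ((n - k : ℕ) : ℝ) := by rw [hnkR]; linarith
    set q : ℝ := (n : ℝ) ^ (-(1 - ε) / (k : ℝ)) with hqdef
    have hq0 : 0 ≤ q := Real.rpow_nonneg npos.le _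
    set m : ℝ := min q 1 with hmdef
    have hm0 : 0 ≤ m := le_min hq0 zero_le_one
    have hm1 : m ≤ 1 := min_le_right _ _
    have hmq : m ≤ q := min_le_left _ _
    have hkne : (k : ℝ) ≠ 0 := ne_of_gt hkR0
    have hmlb : (n : ℝ) ^ ((ε' - 1) / (k : ℝ)) ≤ m := by
      refine le_min ?_ ?_
      · have hexp : -(1 - ε) / (k : ℝ) = (ε - 1) / (k : ℝ) := by ring
        rw [hqdef, hexp]
        refine Real.rpow_le_rpow_of_exponent_le hn1 ?_
        gcongr
      · exact Real.rpow_le_one_of_one_le_of_nonpos hn1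
          (div_nonpos_of_nonpos_of_nonneg (by linarith) hkR0.le)
    have hmk : (n : ℝ) ^ (ε' - 1) ≤ m ^ k := by
      have heq : ((n : ℝ) ^ ((ε' - 1) / (k : ℝ))) ^ k = (n : ℝ) ^ (ε' - 1) := by
        rw [← Real.rpow_natCast ((n : ℝ) ^ ((ε' - 1) / (k : ℝ))) k,
          ← Real.rpow_mul npos.le, div_mul_cancel₀ _ hkne]
      rw [← heq]
      exact pow_le_pow_left₀ (Real.rpow_nonneg npos.le _) hmlb k
    have hmk1 : m ^ k ≤ 1 := pow_le_one₀ hm0 hm1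
    have hmk0 : 0 ≤ m ^ k := pow_nonneg hm0 k
    -- apply bound_n
    refine le_trans (bound_n n k _ _) ?_
    -- ENNReal manipulations
    have step2 : ENNReal.ofReal m ≤ 1 - ENNReal.ofReal (1 - q) := by
      refine ENNReal.le_sub_of_add_le_right ENNReal.ofReal_ne_top ?_
      calc ENNReal.ofReal m + ENNReal.ofReal (1 - q)
          ≤ ENNReal.ofReal m + ENNReal.ofReal (1 - m) :=
            add_le_add le_rfl (ENNReal.ofReal_le_ofReal (by linarith))
        _ = ENNReal.ofReal 1 := by
            rw [← ENNReal.ofReal_add hm0 (by linarith)]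
            norm_num
        _ = 1 := ENNReal.ofReal_one
    have step3 : (1 : ENNReal) - (1 - ENNReal.ofReal (1 - q)) ^ k
        ≤ ENNReal.ofReal (1 - m ^ k) := by
      have h1 : ENNReal.ofReal (m ^ k) ≤ (1 - ENNReal.ofReal (1 - q)) ^ k := by
        rw [ENNReal.ofReal_pow hm0]
        gcongr
      calc (1 : ENNReal) - (1 - ENNReal.ofReal (1 - q)) ^ k
          ≤ 1 - ENNReal.ofReal (m ^ k) := tsub_le_tsub_left h1 1
        _ = ENNReal.ofReal (1 - m ^ k) := by
            rw [ENNReal.ofReal_sub _ hmk0, ENNReal.ofReal_one]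
    calc (n.choose k : ENNReal) * (1 - (1 - ENNReal.ofReal (1 - q)) ^ k) ^ (n - k)
        ≤ ENNReal.ofReal ((n : ℝ) ^ k) * ENNReal.ofReal ((1 - m ^ k) ^ (n - k)) := by
          refine mul_le_mul' ?_ ?_
          · calc (n.choose k : ENNReal) ≤ ((n ^ k : ℕ) : ENNReal) :=
                Nat.cast_le.mpr (Nat.choose_le_pow n k)
              _ = ENNReal.ofReal ((n : ℝ) ^ k) := by
                rw [← ENNReal.ofReal_natCast]
                congr 1
                push_cast
                ring
          · rw [ENNReal.ofReal_pow (by linarith : (0:ℝ) ≤ 1 - m ^ k)]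
            exact pow_le_pow_left' step3 _
      _ = ENNReal.ofReal ((n : ℝ) ^ k * (1 - m ^ k) ^ (n - k)) := by
          rw [← ENNReal.ofReal_mul (pow_nonneg npos.le k)]
      _ ≤ ENNReal.ofReal (Real.exp (c n)) := by
          refine ENNReal.ofReal_le_ofReal ?_
          have hexp1 : (n : ℝ) ^ k = Real.exp ((k : ℝ) * Real.log n) := by
            rw [Real.exp_nat_mul, Real.exp_log npos]
          have hexp2 : (1 - m ^ k) ^ (n - k) ≤ Real.exp (-(((n - k : ℕ) : ℝ) * m ^ k)) := by
            have h1 : 1 - m ^ k ≤ Real.exp (-(m ^ k)) := by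
              have := Real.add_one_le_exp (-(m ^ k))
              linarith
            calc (1 - m ^ k) ^ (n - k) ≤ Real.exp (-(m ^ k)) ^ (n - k) :=
                pow_le_pow_left₀ (by linarith) h1 (n - k)
              _ = Real.exp (-(((n - k : ℕ) : ℝ) * m ^ k)) := by
                rw [← Real.exp_nat_mul]
                congr 1
                ring
          calc (n : ℝ) ^ k * (1 - m ^ k) ^ (n - k)
              ≤ Real.exp ((k : ℝ) * Real.log n) * Real.exp (-(((n - k : ℕ) : ℝ) * m ^ k)) := by
                rw [hexp1]
                exact mul_le_mul_of_nonneg_left hexp2 (Real.exp_nonneg _)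
            _ = Real.exp ((k : ℝ) * Real.log n - ((n - k : ℕ) : ℝ) * m ^ k) := by
                rw [← Real.exp_add]
                congr 1
            _ ≤ Real.exp (c n) := by
                refine Real.exp_le_exp.mpr ?_
                have ha : (k : ℝ) * Real.log n ≤ 2 * Real.log n ^ 2 := by
                  have : (k : ℝ) ≤ 2 * Real.log n := by linarith
                  nlinarith
                have hb : (n : ℝ) ^ ε' / 2 ≤ ((n - k : ℕ) : ℝ) * m ^ k := by
                  have hsplit : (n : ℝ) ^ ε' = (n : ℝ) * (n : ℝ) ^ (ε' - 1) := by
                    have h0 := Real.rpow_add npos 1 (ε' - 1)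
                    rw [Real.rpow_one] at h0
                    have h1 : (1 : ℝ) + (ε' - 1) = ε' := by ring
                    rw [h1] at h0
                    exact h0
                  have hprod : (n : ℝ) / 2 * (n : ℝ) ^ (ε' - 1) ≤ ((n - k : ℕ) : ℝ) * m ^ k :=
                    mul_le_mul hnk2 hmk (Real.rpow_nonneg npos.le _) (by linarith)
                  calc (n : ℝ) ^ ε' / 2
                      = (n : ℝ) / 2 * (n : ℝ) ^ (ε' - 1) := by rw [hsplit]; ring
                    _ ≤ ((n - k : ℕ) : ℝ) * m ^ k := hprod
                have hcn : c n = 2 * Real.log n ^ 2 - (n : ℝ) ^ ε' / 2 := rfl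
                rw [hcn]
                linarith
  refine tendsto_of_tendsto_of_tendsto_of_le_of_le' tendsto_const_nhds hlim ?_ hub
  exact Eventually.of_forall fun n => zero_le
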